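/- If X and Y are bounded random variables and there exists a bounded random variable Z independent of both such that X + Z first-order stochastically dominates Y + Z, then K_a(X) ≥ K_a(Y) for every real a ≠ 0, i.e., (1/a)·log E[e^{aX}] ≥ (1/a)·log E[e^{aY}]. -/

import Mathlib

open MeasureTheory


lemma exp_integrable' {Ω : Type*} [MeasurableSpace Ω] (μ : Measure Ω) [IsProbabilityMeasure μ]
    (a : ℝ) {C : ℝ} {W : Ω → ℝ} (hW : Measurable W) (hC : ∀ ω, |W ω| ≤ C) :
    Integrable (fun ω => Real.exp (a * W ω)) μ := by
  apply Integrable.mono' (integrable_const (Real.exp (|a| * C)))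
  · exact ((measurable_const.mul hW).exp).aestronglyMeasurable
  · refine ae_of_all _ fun ω => ?_
    rw [Real.norm_eq_abs, abs_of_pos (Real.exp_pos _)]
    apply Real.exp_le_exp.mpr
    calc a * W ω ≤ |a * W ω| := le_abs_self _
    _ = |a| * |W ω| := abs_mul _ _
    _ ≤ |a| * C := mul_le_mul_of_nonneg_left (hC ω) (abs_nonneg a)
lemma exp_int_le_pos {Ω : Type*} [MeasurableSpace Ω] (μ : Measure Ω) [IsProbabilityMeasure μ]
    {a : ℝ} (ha : 0 < a) {A B : Ω → ℝ} (hA : Measurable A) (hB : Measurable B)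
    (hdom : ∀ t : ℝ, μ {ω | A ω ≤ t} ≤ μ {ω | B ω ≤ t})
    (hAi : Integrable (fun ω => Real.exp (a * A ω)) μ)
    (hBi : Integrable (fun ω => Real.exp (a * B ω)) μ) :
    ∫ ω, Real.exp (a * B ω) ∂μ ≤ ∫ ω, Real.exp (a * A ω) ∂μ := by
  rw [hAi.integral_eq_integral_meas_lt (ae_of_all _ fun ω => (Real.exp_pos _).le),
      hBi.integral_eq_integral_meas_lt (ae_of_all _ fun ω => (Real.exp_pos _).le)]
  have key : ∀ t : ℝ, 0 < t →
      μ {ω | t < Real.exp (a * B ω)} ≤ μ {ω | t < Real.exp (a * A ω)} := by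
    intro t ht
    have hset : ∀ (W : Ω → ℝ), {ω | t < Real.exp (a * W ω)} = {ω | W ω ≤ Real.log t / a}ᶜ := by
      intro W
      ext ω
      simp only [Set.mem_setOf_eq, Set.mem_compl_iff, not_le]
      rw [← Real.exp_log ht, Real.exp_lt_exp, Real.exp_log ht, div_lt_iff₀' ha]
    have hmA : MeasurableSet {ω | A ω ≤ Real.log t / a} := hA measurableSet_Iic
    have hmB : MeasurableSet {ω | B ω ≤ Real.log t / a} := hB measurableSet_Iic
    rw [hset A, hset B, measure_compl hmA (measure_ne_top μ _),
        measure_compl hmB (measure_ne_top μ _)]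
    exact tsub_le_tsub_left (hdom _) _
  -- now compare the integrals of the tail functions
  have int_mono : ∫⁻ t in Set.Ioi (0:ℝ), μ {ω | t < Real.exp (a * B ω)}
      ≤ ∫⁻ t in Set.Ioi (0:ℝ), μ {ω | t < Real.exp (a * A ω)} := by
    refine lintegral_mono_ae ?_
    filter_upwards [ae_restrict_mem measurableSet_Ioi] with t ht
    exact key t ht
  have measf : ∀ (W : Ω → ℝ), Measurable fun t => μ {ω | t < Real.exp (a * W ω)} :=
    fun W => Antitone.measurable (fun s t hst => measure_mono fun ω h => lt_of_le_of_lt hst h)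
  have finA : ∫⁻ t in Set.Ioi (0:ℝ), μ {ω | t < Real.exp (a * A ω)} ≠ ⊤ := by
    rw [← lintegral_eq_lintegral_meas_lt μ (ae_of_all _ fun ω => (Real.exp_pos _).le)
      hAi.aemeasurable]
    exact hAi.lintegral_lt_top.ne
  calc ∫ t in Set.Ioi (0:ℝ), (μ {ω | t < Real.exp (a * B ω)}).toReal
      = (∫⁻ t in Set.Ioi (0:ℝ), μ {ω | t < Real.exp (a * B ω)}).toReal :=
        integral_toReal (measf B).aemeasurable (ae_of_all _ fun t => measure_lt_top μ _)
    _ ≤ (∫⁻ t in Set.Ioi (0:ℝ), μ {ω | t < Real.exp (a * A ω)}).toReal :=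
        ENNReal.toReal_mono finA int_mono
    _ = ∫ t in Set.Ioi (0:ℝ), (μ {ω | t < Real.exp (a * A ω)}).toReal :=
        (integral_toReal (measf A).aemeasurable (ae_of_all _ fun t => measure_lt_top μ _)).symm

lemma exp_int_le_neg {Ω : Type*} [MeasurableSpace Ω] (μ : Measure Ω) [IsProbabilityMeasure μ]
    {a : ℝ} (ha : a < 0) {A B : Ω → ℝ} (hA : Measurable A) (hB : Measurable B)
    (hdom : ∀ t : ℝ, μ {ω | A ω ≤ t} ≤ μ {ω | B ω ≤ t})
    (hAi : Integrable (fun ω => Real.exp (a * A ω)) μ)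
    (hBi : Integrable (fun ω => Real.exp (a * B ω)) μ) :
    ∫ ω, Real.exp (a * A ω) ∂μ ≤ ∫ ω, Real.exp (a * B ω) ∂μ := by
  rw [hAi.integral_eq_integral_meas_le (ae_of_all _ fun ω => (Real.exp_pos _).le),
      hBi.integral_eq_integral_meas_le (ae_of_all _ fun ω => (Real.exp_pos _).le)]
  have hset : ∀ (W : Ω → ℝ) (t : ℝ), 0 < t →
      {ω | t ≤ Real.exp (a * W ω)} = {ω | W ω ≤ Real.log t / a} := by
    intro W t ht
    ext ω
    simp only [Set.mem_setOf_eq]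
    rw [← Real.exp_log ht, Real.exp_le_exp, Real.exp_log ht, le_div_iff_of_neg ha, mul_comm]
  have key : ∀ t : ℝ, 0 < t →
      μ {ω | t ≤ Real.exp (a * A ω)} ≤ μ {ω | t ≤ Real.exp (a * B ω)} := by
    intro t ht
    rw [hset A t ht, hset B t ht]
    exact hdom _
  have int_mono : ∫⁻ t in Set.Ioi (0:ℝ), μ {ω | t ≤ Real.exp (a * A ω)}
      ≤ ∫⁻ t in Set.Ioi (0:ℝ), μ {ω | t ≤ Real.exp (a * B ω)} := by
    refine lintegral_mono_ae ?_
    filter_upwards [ae_restrict_mem measurableSet_Ioi] with t ht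
    exact key t ht
  have measf : ∀ (W : Ω → ℝ), Measurable fun t => μ {ω | t ≤ Real.exp (a * W ω)} :=
    fun W => Antitone.measurable (fun s t hst => measure_mono fun ω h => le_trans hst h)
  have finB : ∫⁻ t in Set.Ioi (0:ℝ), μ {ω | t ≤ Real.exp (a * B ω)} ≠ ⊤ := by
    rw [← lintegral_eq_lintegral_meas_le μ (ae_of_all _ fun ω => (Real.exp_pos _).le)
      hBi.aemeasurable]
    exact hBi.lintegral_lt_top.ne
  calc ∫ t in Set.Ioi (0:ℝ), (μ {ω | t ≤ Real.exp (a * A ω)}).toReal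
      = (∫⁻ t in Set.Ioi (0:ℝ), μ {ω | t ≤ Real.exp (a * A ω)}).toReal :=
        integral_toReal (measf A).aemeasurable (ae_of_all _ fun t => measure_lt_top μ _)
    _ ≤ (∫⁻ t in Set.Ioi (0:ℝ), μ {ω | t ≤ Real.exp (a * B ω)}).toReal :=
        ENNReal.toReal_mono finB int_mono
    _ = ∫ t in Set.Ioi (0:ℝ), (μ {ω | t ≤ Real.exp (a * B ω)}).toReal :=
        (integral_toReal (measf B).aemeasurable (ae_of_all _ fun t => measure_lt_top μ _)).symm

/-- If `X + Z ≥₁ Y + Z` for some bounded `Z` independent of `X` and `Y`, then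
`K_a(X) ≥ K_a(Y)` for every `a ≠ 0`. -/
theorem K_monotone_of_catalytic_dominance
    {Ω : Type*} [MeasurableSpace Ω] (μ : Measure Ω) [IsProbabilityMeasure μ]
    (X Y Z : Ω → ℝ) (hX : Measurable X) (hY : Measurable Y) (hZ : Measurable Z)
    (hXb : ∃ C, ∀ ω, |X ω| ≤ C) (hYb : ∃ C, ∀ ω, |Y ω| ≤ C)
    (hZb : ∃ C, ∀ ω, |Z ω| ≤ C)
    (hindXZ : ProbabilityTheory.IndepFun X Z μ)
    (hindYZ : ProbabilityTheory.IndepFun Y Z μ)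
    (hdom : ∀ t : ℝ, μ {ω | X ω + Z ω ≤ t} ≤ μ {ω | Y ω + Z ω ≤ t}) :
    ∀ a : ℝ, a ≠ 0 →
      (1 / a) * Real.log (∫ ω, Real.exp (a * Y ω) ∂μ) ≤
        (1 / a) * Real.log (∫ ω, Real.exp (a * X ω) ∂μ) := by
  intro a ha
  obtain ⟨CX, hCX⟩ := hXb
  obtain ⟨CY, hCY⟩ := hYb
  obtain ⟨CZ, hCZ⟩ := hZb
  have hm : Measurable fun x : ℝ => Real.exp (a * x) := (measurable_id.const_mul a).exp
  have intX : Integrable (fun ω => Real.exp (a * X ω)) μ := exp_integrable' μ a hX hCX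
  have intY : Integrable (fun ω => Real.exp (a * Y ω)) μ := exp_integrable' μ a hY hCY
  have intZ : Integrable (fun ω => Real.exp (a * Z ω)) μ := exp_integrable' μ a hZ hCZ
  have hCXZ : ∀ ω, |X ω + Z ω| ≤ CX + CZ := fun ω =>
    (abs_add_le _ _).trans (add_le_add (hCX ω) (hCZ ω))
  have hCYZ : ∀ ω, |Y ω + Z ω| ≤ CY + CZ := fun ω =>
    (abs_add_le _ _).trans (add_le_add (hCY ω) (hCZ ω))
  have intXZ : Integrable (fun ω => Real.exp (a * (X ω + Z ω))) μ :=
    exp_integrable' μ a (hX.add hZ) hCXZ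
  have intYZ : Integrable (fun ω => Real.exp (a * (Y ω + Z ω))) μ :=
    exp_integrable' μ a (hY.add hZ) hCYZ
  -- factorizations by independence
  have hfacX : ∫ ω, Real.exp (a * (X ω + Z ω)) ∂μ
      = (∫ ω, Real.exp (a * X ω) ∂μ) * ∫ ω, Real.exp (a * Z ω) ∂μ := by
    have h := (hindXZ.comp hm hm).integral_mul_eq_mul_integral intX.aestronglyMeasurable intZ.aestronglyMeasurable
    calc ∫ ω, Real.exp (a * (X ω + Z ω)) ∂μ
        = ∫ ω, Real.exp (a * X ω) * Real.exp (a * Z ω) ∂μ := by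
          congr 1; funext ω; rw [mul_add, Real.exp_add]
      _ = _ := by simpa [Function.comp_def] using h
  have hfacY : ∫ ω, Real.exp (a * (Y ω + Z ω)) ∂μ
      = (∫ ω, Real.exp (a * Y ω) ∂μ) * ∫ ω, Real.exp (a * Z ω) ∂μ := by
    have h := (hindYZ.comp hm hm).integral_mul_eq_mul_integral intY.aestronglyMeasurable intZ.aestronglyMeasurable
    calc ∫ ω, Real.exp (a * (Y ω + Z ω)) ∂μ
        = ∫ ω, Real.exp (a * Y ω) * Real.exp (a * Z ω) ∂μ := by
          congr 1; funext ω; rw [mul_add, Real.exp_add]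
      _ = _ := by simpa [Function.comp_def] using h
  -- positivity of the exponential integrals
  have hpos : ∀ (W : Ω → ℝ) (C : ℝ), Measurable W → (∀ ω, |W ω| ≤ C) →
      Integrable (fun ω => Real.exp (a * W ω)) μ →
      0 < ∫ ω, Real.exp (a * W ω) ∂μ := by
    intro W C hW hC hint
    have hlb : ∀ ω, Real.exp (-(|a| * C)) ≤ Real.exp (a * W ω) := fun ω => by
      apply Real.exp_le_exp.mpr
      nlinarith [neg_abs_le (a * W ω), abs_mul a (W ω),
        mul_le_mul_of_nonneg_left (hC ω) (abs_nonneg a)]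
    calc (0:ℝ) < Real.exp (-(|a| * C)) := Real.exp_pos _
      _ = ∫ _ω, Real.exp (-(|a| * C)) ∂μ := by simp
      _ ≤ ∫ ω, Real.exp (a * W ω) ∂μ := integral_mono (integrable_const _) hint hlb
  have hXpos := hpos X CX hX hCX intX
  have hYpos := hpos Y CY hY hCY intY
  have hZpos := hpos Z CZ hZ hCZ intZ
  rcases ha.lt_or_gt with haneg | hapos
  · -- a < 0
    have hcomp := exp_int_le_neg μ haneg (A := fun ω => X ω + Z ω) (B := fun ω => Y ω + Z ω) (hX.add hZ) (hY.add hZ) hdom intXZ intYZ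
    rw [hfacX, hfacY] at hcomp
    have hle : ∫ ω, Real.exp (a * X ω) ∂μ ≤ ∫ ω, Real.exp (a * Y ω) ∂μ :=
      le_of_mul_le_mul_right hcomp hZpos
    have hlog : Real.log (∫ ω, Real.exp (a * X ω) ∂μ)
        ≤ Real.log (∫ ω, Real.exp (a * Y ω) ∂μ) := Real.log_le_log hXpos hle
    have h1a : (1 / a : ℝ) ≤ 0 := by
      rw [div_nonpos_iff]
      exact Or.inl ⟨zero_le_one, haneg.le⟩
    exact mul_le_mul_of_nonpos_left hlog h1a
  · -- a > 0
    have hcomp := exp_int_le_pos μ hapos (A := fun ω => X ω + Z ω) (B := fun ω => Y ω + Z ω) (hX.add hZ) (hY.add hZ) hdom intXZ intYZ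
    rw [hfacX, hfacY] at hcomp
    have hle : ∫ ω, Real.exp (a * Y ω) ∂μ ≤ ∫ ω, Real.exp (a * X ω) ∂μ :=
      le_of_mul_le_mul_right hcomp hZpos
    have hlog : Real.log (∫ ω, Real.exp (a * Y ω) ∂μ)
        ≤ Real.log (∫ ω, Real.exp (a * X ω) ∂μ) := Real.log_le_log hYpos hle
    exact mul_le_mul_of_nonneg_left hlog (by positivity)
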